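/- Let n ≥ 1 and for each i ∈ {1,...,n} let v^i ∈ ℚⁿ (or ℝⁿ) be a vector with v^i_i = 1/2 and |v^i_j| ≤ 1 for all j. Let y_1,...,y_n be independent random variables, each uniformly distributed on [−1,1], and set u = Σ_{i=1}^n y_i v^i. Then for each fixed coordinate i, Pr[|u_i| ≤ 1/(4n)] ≤ 1/(2n). -/

import Mathlib

open MeasureTheory ProbabilityTheory

/-- Let `v 1, …, v n` be vectors with `v i i = 1/2` and `|v i j| ≤ 1`, and let
`y 1, …, y n` be independent random variables, each uniform on `[-1, 1]`. Setting
`u = ∑ i, y i • v i`, for each fixed coordinate `i` we have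
`Pr[|u i| ≤ 1/(4n)] ≤ 1/(2n)`. -/
theorem prob_small_coordinate_le
    {Ω : Type*} [MeasurableSpace Ω] (μ : Measure Ω) [IsProbabilityMeasure μ]
    (n : ℕ) (hn : 1 ≤ n)
    (v : Fin n → Fin n → ℝ)
    (hvdiag : ∀ i, v i i = 1/2) (hvbd : ∀ i j, |v i j| ≤ 1)
    (y : Fin n → Ω → ℝ) (hmeas : ∀ i, Measurable (y i))
    (hindep : iIndepFun y μ)
    (hunif : ∀ i, Measure.map (y i) μ
      = (2 : ENNReal)⁻¹ • (volume.restrict (Set.Icc (-1 : ℝ) 1)))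
    (i : Fin n) :
    μ {ω | |∑ j, y j ω * v j i| ≤ 1 / (4 * n)} ≤ 1 / (2 * n) := by
  classical
  have hnpos : (0:ℝ) < n := by exact_mod_cast hn
  set ε : ℝ := 1 / (4 * n) with hεdef
  have hεpos : 0 < ε := by positivity
  -- scaled variables
  set Y : Fin n → Ω → ℝ := fun j ω => y j ω * v j i with hYdef
  have hYmeas : ∀ j, Measurable (Y j) := fun j => (hmeas j).mul_const _
  have hindep' : iIndepFun Y μ :=
    hindep.comp (fun j x => x * v j i) (fun j => measurable_mul_const _)
  set s : Finset (Fin n) := Finset.univ.erase i with hsdef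
  set S : Ω → ℝ := ∑ j ∈ s, Y j with hSdef
  have hSmeas : Measurable S := by
    have h : S = fun ω => ∑ j ∈ s, Y j ω := by ext ω; simp [hSdef]
    rw [h]; exact Finset.measurable_sum _ fun j _ => hYmeas j
  have hIndepSY : IndepFun S (Y i) μ :=
    hindep'.indepFun_finsetSum_of_notMem hYmeas (Finset.notMem_erase i _)
  -- rewrite the event
  have hsum : ∀ ω, (∑ j, y j ω * v j i) = S ω + Y i ω := by
    intro ω
    rw [hSdef, Finset.sum_apply, hsdef, Finset.sum_erase_add]
    exact Finset.mem_univ i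
  have hev : {ω | |∑ j, y j ω * v j i| ≤ 1 / (4 * (n:ℝ))}
      = (fun ω => (S ω, Y i ω)) ⁻¹' {p : ℝ × ℝ | |p.1 + p.2| ≤ ε} := by
    ext ω; simp [hsum ω, hεdef]
  have hTmeas : MeasurableSet {p : ℝ × ℝ | |p.1 + p.2| ≤ ε} :=
    measurableSet_le ((measurable_fst.add measurable_snd).abs) measurable_const
  rw [hev, ← Measure.map_apply (hSmeas.prodMk (hYmeas i)) hTmeas]
  have hmap : μ.map (fun ω => (S ω, Y i ω)) = (μ.map S).prod (μ.map (Y i)) :=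
    (indepFun_iff_map_prod_eq_prod_map_map hSmeas.aemeasurable
      (hYmeas i).aemeasurable).mp hIndepSY
  rw [hmap]
  have hmapYi : μ.map (Y i) = (μ.map (y i)).map (fun x => x * v i i) := by
    rw [Measure.map_map (measurable_mul_const _) (hmeas i)]
    rfl
  have hprob : IsProbabilityMeasure (μ.map (S)) :=
    Measure.isProbabilityMeasure_map hSmeas.aemeasurable
  rw [Measure.prod_apply hTmeas]
  -- bound the inner measure uniformly
  have hbound : ∀ a : ℝ, (μ.map (Y i)) {x : ℝ | |a + x| ≤ ε} ≤ 1 / (2 * n) := by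
    intro a
    have hset : MeasurableSet {x : ℝ | |a + x| ≤ ε} :=
      measurableSet_le ((measurable_const.add measurable_id).abs) measurable_const
    rw [hmapYi, Measure.map_apply (measurable_mul_const _) hset, hunif i]
    have hpre : (fun x => x * v i i) ⁻¹' {x : ℝ | |a + x| ≤ ε}
        = Set.Icc (2 * (-ε - a)) (2 * (ε - a)) := by
      ext x
      simp only [Set.mem_preimage, Set.mem_setOf_eq, Set.mem_Icc, abs_le, hvdiag i]
      constructor <;> rintro ⟨h1, h2⟩ <;> constructor <;> linarith
    rw [hpre]
    simp only [Measure.smul_apply, smul_eq_mul]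
    calc (2:ENNReal)⁻¹ * (volume.restrict (Set.Icc (-1:ℝ) 1)) (Set.Icc (2 * (-ε - a)) (2 * (ε - a)))
        ≤ (2:ENNReal)⁻¹ * volume (Set.Icc (2 * (-ε - a)) (2 * (ε - a))) := by
          gcongr
          exact Measure.restrict_le_self
      _ = (2:ENNReal)⁻¹ * ENNReal.ofReal (2 * (ε - a) - 2 * (-ε - a)) := by
          rw [Real.volume_Icc]
      _ = (2:ENNReal)⁻¹ * ENNReal.ofReal (4 * ε) := by ring_nf
      _ = 1 / (2 * n) := by
          have h4e : (4:ℝ) * ε = ((n:ℝ))⁻¹ := by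
            rw [hεdef]; field_simp
          have hofr : ENNReal.ofReal (4 * ε) = (n : ENNReal)⁻¹ := by
            rw [h4e, ENNReal.ofReal_inv_of_pos hnpos, ENNReal.ofReal_natCast]
          rw [hofr, one_div, ENNReal.mul_inv (by simp) (by simp)]
  calc ∫⁻ a, (μ.map (Y i)) (Prod.mk a ⁻¹' {p : ℝ × ℝ | |p.1 + p.2| ≤ ε}) ∂(μ.map S)
      ≤ ∫⁻ _, 1 / (2 * n) ∂(μ.map S) := by
        refine lintegral_mono fun a => ?_
        have : (Prod.mk a ⁻¹' {p : ℝ × ℝ | |p.1 + p.2| ≤ ε}) = {x : ℝ | |a + x| ≤ ε} := rfl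
        rw [this]; exact hbound a
    _ = 1 / (2 * n) := by simp
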